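/- Let A be a p × p positive semidefinite matrix written in block form A = [[Γ, v], [vᵀ, a]] with Γ of size (p−1) × (p−1), v ∈ ℝ^{p−1}, a ∈ ℝ, and let τ > 0; set Γ_τ = Γ + τ Id_{p−1}. Then tr((A + τ Id_p)⁻¹) = tr(Γ_τ⁻¹) + (1 + vᵀ Γ_τ⁻² v) / (a + τ − vᵀ Γ_τ⁻¹ v). In particular, |tr((A + τ Id_p)⁻¹) − tr(Γ_τ⁻¹)| ≤ (1 + a/τ)/τ. -/

import Mathlib

noncomputable section

open scoped BigOperators
open Matrix

lemma trace_fromBlocks_aux {m n R : Type*} [Fintype m] [Fintype n] [AddCommMonoid R]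
    (A : Matrix m m R) (B : Matrix m n R) (C : Matrix n m R) (D : Matrix n n R) :
    Matrix.trace (Matrix.fromBlocks A B C D) = Matrix.trace A + Matrix.trace D := by
  simp [Matrix.trace, Fintype.sum_sum_type, Matrix.diag, Matrix.fromBlocks]

lemma unit_trace_aux {R : Type*} [AddCommMonoid R] (M : Matrix Unit Unit R) :
    Matrix.trace M = M () () := by
  simp [Matrix.trace, Matrix.diag]

theorem statement17 {q : ℕ} (Γ : Matrix (Fin q) (Fin q) ℝ) (v : Fin q → ℝ) (a : ℝ)
    (τ : ℝ) (hτ : 0 < τ)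
    -- A = [[Γ, v], [vᵀ, a]] in block form
    (A : Matrix (Fin q ⊕ Unit) (Fin q ⊕ Unit) ℝ)
    (hA : A = Matrix.fromBlocks Γ (fun i (_ : Unit) => v i) (fun (_ : Unit) j => v j)
      (fun (_ : Unit) (_ : Unit) => a))
    -- A is positive semidefinite
    (hApsd : A.PosSemidef)
    -- Γ_τ = Γ + τ Id
    (Γτ : Matrix (Fin q) (Fin q) ℝ) (hΓτ : Γτ = Γ + τ • (1 : Matrix (Fin q) (Fin q) ℝ)) :
    Matrix.trace ((A + τ • (1 : Matrix (Fin q ⊕ Unit) (Fin q ⊕ Unit) ℝ))⁻¹) =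
      Matrix.trace Γτ⁻¹ +
        (1 + v ⬝ᵥ (Γτ⁻¹ * Γτ⁻¹).mulVec v) / (a + τ - v ⬝ᵥ Γτ⁻¹.mulVec v) ∧
    |Matrix.trace ((A + τ • (1 : Matrix (Fin q ⊕ Unit) (Fin q ⊕ Unit) ℝ))⁻¹) -
        Matrix.trace Γτ⁻¹| ≤ (1 + a / τ) / τ := by
  -- Γ is positive semidefinite
  have hΓpsd : Γ.PosSemidef := by
    have h := hApsd.submatrix Sum.inl
    have he : A.submatrix Sum.inl Sum.inl = Γ := by subst hA; ext i j; rfl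
    rwa [he] at h
  have hτ1 : (τ • (1 : Matrix (Fin q) (Fin q) ℝ)).PosDef := by
    rw [smul_one_eq_diagonal]
    exact Matrix.PosDef.diagonal fun _ => hτ
  have hΓτpd : Γτ.PosDef := by rw [hΓτ]; exact Matrix.PosDef.posSemidef_add hΓpsd hτ1
  letI : Invertible Γτ := hΓτpd.isUnit.invertible
  have hinvΓτ : ⅟Γτ = Γτ⁻¹ := invOf_eq_nonsing_inv Γτ
  set u : Fin q → ℝ := Γτ⁻¹.mulVec v with hu
  have hΓτu : Γτ.mulVec u = v := by
    rw [hu, Matrix.mulVec_mulVec, Matrix.mul_inv_of_invertible, Matrix.one_mulVec]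
  have hherm : Γτ⁻¹ᵀ = Γτ⁻¹ := by
    have h := hΓτpd.inv.isHermitian
    rwa [Matrix.IsHermitian, Matrix.conjTranspose_eq_transpose_of_trivial] at h
  have hw₂ : v ⬝ᵥ (Γτ⁻¹ * Γτ⁻¹).mulVec v = u ⬝ᵥ u := by
    rw [← Matrix.mulVec_mulVec, Matrix.dotProduct_mulVec v Γτ⁻¹]
    congr 1
    rw [← Matrix.mulVec_transpose, hherm]
  have hΓu : Γ.mulVec u = v - τ • u := by
    have hΓ : Γ = Γτ - τ • (1 : Matrix (Fin q) (Fin q) ℝ) := by rw [hΓτ]; abel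
    rw [hΓ, Matrix.sub_mulVec, hΓτu, Matrix.smul_mulVec, Matrix.one_mulVec]
  -- key inequality from positive semidefiniteness
  have ha : v ⬝ᵥ u + τ * (u ⬝ᵥ u) ≤ a := by
    have hx := hApsd.dotProduct_mulVec_nonneg (Sum.elim (-u) (fun _ : Unit => (1 : ℝ)))
    rw [hA] at hx
    erw [star_trivial, Matrix.fromBlocks_mulVec] at hx
    simp only [Sum.elim_comp_inl, Sum.elim_comp_inr] at hx
    rw [sumElim_dotProduct_sumElim] at hx
    have h1 : Matrix.mulVec (m := Fin q) (n := Unit) (fun i _ => v i) (fun _ => (1 : ℝ)) = v := by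
      ext i; simp [Matrix.mulVec, dotProduct]
    have h2 : Matrix.mulVec (m := Unit) (n := Fin q) (fun _ j => v j) (-u)
        = fun _ => -(v ⬝ᵥ u) := by
      ext i; simp [Matrix.mulVec, dotProduct]
    have h3 : Matrix.mulVec (m := Unit) (n := Unit) (fun _ _ => a) (fun _ => (1 : ℝ))
        = fun _ => a := by
      ext i; simp [Matrix.mulVec, dotProduct]
    rw [Matrix.mulVec_neg, h1, h2, h3, hΓu] at hx
    have h5 : (-u) ⬝ᵥ (-(v - τ • u) + v) = -(τ * (u ⬝ᵥ u)) := by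
      rw [neg_dotProduct, dotProduct_add, dotProduct_neg,
        dotProduct_sub, dotProduct_smul]
      simp
    have h6 : (fun _ : Unit => (1 : ℝ)) ⬝ᵥ ((fun _ => -(v ⬝ᵥ u)) + fun _ => a)
        = -(v ⬝ᵥ u) + a := by
      simp [dotProduct]
    rw [h5, h6] at hx
    linarith [hx]
  have hw₁ : 0 ≤ v ⬝ᵥ u := by
    have h := hΓτpd.inv.posSemidef.dotProduct_mulVec_nonneg v
    rwa [star_trivial] at h
  have hu2 : 0 ≤ u ⬝ᵥ u := Finset.sum_nonneg fun i _ => mul_self_nonneg (u i)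
  set s := a + τ - v ⬝ᵥ u with hs_def
  have hs : τ * (1 + u ⬝ᵥ u) ≤ s := by rw [hs_def]; nlinarith
  have hspos : 0 < s := lt_of_lt_of_le (by nlinarith) hs
  have ha0 : 0 ≤ a := by nlinarith
  -- block decomposition of A + τ•1
  have hAτ : A + τ • (1 : Matrix (Fin q ⊕ Unit) (Fin q ⊕ Unit) ℝ)
      = Matrix.fromBlocks Γτ (Matrix.replicateCol Unit v) (Matrix.replicateRow Unit v)
        (Matrix.of fun _ _ => a + τ) := by
    subst hA; rw [hΓτ]
    ext i j
    rcases i with i | i <;> rcases j with j | j <;>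
      simp [Matrix.fromBlocks, Matrix.one_apply, Matrix.replicateCol, Matrix.replicateRow]
  set Bm : Matrix (Fin q) Unit ℝ := Matrix.replicateCol Unit v with hBm
  set Cm : Matrix Unit (Fin q) ℝ := Matrix.replicateRow Unit v with hCm
  set Dm : Matrix Unit Unit ℝ := Matrix.of fun _ _ => a + τ with hDm
  have hCMB : Cm * Γτ⁻¹ * Bm = Matrix.of fun _ _ => v ⬝ᵥ u := by
    rw [Matrix.mul_assoc, hBm, ← Matrix.replicateCol_mulVec, hCm, Matrix.replicateRow_mul_replicateCol]
  have hS : Dm - Cm * ⅟Γτ * Bm = Matrix.of fun _ _ => s := by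
    rw [hinvΓτ, hCMB]; ext i j; simp [hs_def, hDm]
  letI instS : Invertible (Matrix.of fun (_ _ : Unit) => s) :=
    Matrix.invertibleOfIsUnitDet _
      (by rw [Matrix.det_unique]; exact isUnit_iff_ne_zero.mpr hspos.ne')
  letI : Invertible (Dm - Cm * ⅟Γτ * Bm) := hS ▸ instS
  letI instF : Invertible (Matrix.fromBlocks Γτ Bm Cm Dm) :=
    Matrix.fromBlocks₁₁Invertible Γτ Bm Cm Dm
  have hinvS : ⅟(Dm - Cm * ⅟Γτ * Bm) = Matrix.of fun _ _ => s⁻¹ := by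
    apply invOf_eq_right_inv
    rw [hS]; ext i j
    rcases i; rcases j
    simp [Matrix.mul_apply, Matrix.one_apply, mul_inv_cancel₀ hspos.ne']
  have hofsmul : (Matrix.of fun (_ _ : Unit) => s⁻¹) = s⁻¹ • (1 : Matrix Unit Unit ℝ) := by
    ext i j; rcases i; rcases j; simp [Matrix.one_apply]
  have hmid : Matrix.trace (Γτ⁻¹ * Bm * (Matrix.of fun (_ _ : Unit) => s⁻¹ : Matrix Unit Unit ℝ) * Cm * Γτ⁻¹)
      = s⁻¹ * (u ⬝ᵥ u) := by
    rw [hofsmul, Matrix.mul_smul, Matrix.mul_one, Matrix.smul_mul, Matrix.smul_mul,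
      Matrix.trace_smul, smul_eq_mul]
    congr 1
    rw [Matrix.mul_assoc (Γτ⁻¹ * Bm), Matrix.trace_mul_comm, hBm, ← Matrix.replicateCol_mulVec,
      Matrix.mul_assoc, ← Matrix.replicateCol_mulVec, Matrix.mulVec_mulVec, hCm, Matrix.replicateRow_mul_replicateCol,
      unit_trace_aux]
    rw [← hw₂]; rfl
  have htr : Matrix.trace ((A + τ • (1 : Matrix (Fin q ⊕ Unit) (Fin q ⊕ Unit) ℝ))⁻¹)
      = Matrix.trace Γτ⁻¹ + (1 + u ⬝ᵥ u) / s := by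
    rw [hAτ, ← invOf_eq_nonsing_inv, Matrix.invOf_fromBlocks₁₁_eq, trace_fromBlocks_aux,
      Matrix.trace_add, hinvS, hinvΓτ, hmid, unit_trace_aux]
    simp only [Matrix.of_apply]
    field_simp
    ring
  have hw₂' : v ⬝ᵥ (Γτ⁻¹ * Γτ⁻¹).mulVec v = u ⬝ᵥ u := hw₂
  constructor
  · rw [htr, hw₂']
  · rw [htr]
    rw [add_sub_cancel_left, abs_of_nonneg (div_nonneg (by linarith) hspos.le)]
    have h1τ : (1 + u ⬝ᵥ u) / s ≤ 1 / τ := by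
      rw [div_le_div_iff₀ hspos hτ]; nlinarith
    have h2τ : 1 / τ ≤ (1 + a / τ) / τ :=
      (div_le_div_iff_of_pos_right hτ).mpr (by linarith [div_nonneg ha0 hτ.le])
    linarith
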